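/- Let M, M' ⊂ ℝ^D be two compact d-dimensional C¹ submanifolds without boundary, and let x ∈ M ∩ M' be such that T_xM ≠ T_xM'. Then there exists r > 0 such that the set A = M ∩ M' ∩ B̄(x,r) satisfies H^d(A) = 0 (so in particular λ_M(A) = λ_{M'}(A) = 0). -/

import Mathlib

open Metric Set ENNReal MeasureTheory
open NNReal RealInnerProductSpace

noncomputable section

abbrev Euc (D : ℕ) := EuclideanSpace ℝ (Fin D)

variable {D : ℕ}

/-- `M ⊆ ℝ^D` is a `C^k` embedded `d`-dimensional submanifold without boundary. -/
def IsSubmanifold (k d : ℕ) (M : Set (Euc D)) : Prop :=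
  ∀ x ∈ M, ∃ (u : Set (Euc d)) (v : Set (Euc D)) (ψ : Euc d → Euc D) (φ : Euc D → Euc d),
    IsOpen u ∧ IsOpen v ∧ x ∈ v ∧ ContDiffOn ℝ k ψ u ∧
    (∀ y ∈ u, Function.Injective (fderiv ℝ ψ y)) ∧
    Set.BijOn ψ u (M ∩ v) ∧ ContinuousOn φ (M ∩ v) ∧ ∀ y ∈ u, φ (ψ y) = y

/-- Tangent set of `M` at `x`: velocities at time `0` of curves through `x` drawn on `M`.
For a `C¹` submanifold, this is the tangent space `T_x M`. -/
def TangentSetAt (M : Set (Euc D)) (x : Euc D) : Set (Euc D) :=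
  {v | ∃ γ : ℝ → Euc D, (∀ t, γ t ∈ M) ∧ γ 0 = x ∧ HasDerivAt γ v 0}

section Helpers

theorem vol_null_hausdorff (d : ℕ) (s : Set (Euc d)) (h : volume s = 0) : μH[(d:ℝ)] s = 0 := by
  set f : (Fin d → ℝ) → Euc d := fun y => (WithLp.equiv 2 (Fin d → ℝ)).symm y with hf
  obtain ⟨K, hlip⟩ : ∃ K, LipschitzWith K f :=
    ⟨_, PiLp.lipschitzWith_toLp 2 (fun _ : Fin d => ℝ)⟩
  have himg : s = f '' ((WithLp.equiv 2 (Fin d → ℝ)) '' s) := by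
    rw [← Set.image_comp]; simp [f]
  rw [himg]
  refine le_antisymm ?_ zero_le
  calc μH[(d:ℝ)] (f '' ((WithLp.equiv 2 (Fin d → ℝ)) '' s))
      ≤ (K : ℝ≥0∞) ^ (d:ℝ) * μH[(d:ℝ)] ((WithLp.equiv 2 (Fin d → ℝ)) '' s) :=
        hlip.hausdorffMeasure_image_le (by positivity) _
    _ = 0 := by
        have hpi : (μH[(d:ℝ)] : Measure (Fin d → ℝ)) = volume := by
          rw [← MeasureTheory.hausdorffMeasure_pi_real (ι := Fin d)]
          norm_num
        rw [hpi]
        have h2 : volume ((WithLp.equiv 2 (Fin d → ℝ)) '' s) = volume s := by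
          rw [← (PiLp.volume_preserving_toLp (Fin d)).measure_preimage_emb
            (MeasurableEquiv.measurableEmbedding (MeasurableEquiv.toLp 2 (Fin d → ℝ)))]
          congr 1
          ext y; simp [Set.mem_image, Set.mem_preimage]
          constructor
          · rintro ⟨x, hx, rfl⟩; simpa using hx
          · intro hy; exact ⟨_, hy, rfl⟩
        rw [h2, h, mul_zero]

theorem tangent_subset_ker (N : Set (Euc D)) (x : Euc D)
    (F : Euc D → Euc D) (L : Euc D →L[ℝ] Euc D) (ε : ℝ) (hε : 0 < ε)
    (hF' : HasFDerivAt F L x) (hvan : ∀ p ∈ N, dist p x < ε → F p = 0) :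
    ∀ p ∈ TangentSetAt N x, L p = 0 := by
  rintro p ⟨γ, hγN, hγ0, hγ'⟩
  have hc : ContinuousAt γ 0 := hγ'.continuousAt
  have hball : ∀ᶠ t in nhds (0:ℝ), γ t ∈ ball x ε := by
    have : ball x ε ∈ nhds (γ 0) := by rw [hγ0]; exact ball_mem_nhds x hε
    exact hc this
  have heq : (fun t => F (γ t)) =ᶠ[nhds (0:ℝ)] fun _ => (0 : Euc D) := by
    filter_upwards [hball] with t ht
    exact hvan (γ t) (hγN t) (mem_ball.mp ht)
  have h1 : HasDerivAt (fun t => F (γ t)) (L p) 0 := by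
    have hF'' : HasFDerivAt F L (γ 0) := by rw [hγ0]; exact hF'
    exact hF''.comp_hasDerivAt 0 hγ'
  have h2 : HasDerivAt (fun _ : ℝ => (0 : Euc D)) 0 0 := hasDerivAt_const 0 0
  have h3 : HasDerivAt (fun t => F (γ t)) 0 0 := h2.congr_of_eventuallyEq heq
  exact h1.unique h3

theorem range_subset_tangent {d : ℕ} (N : Set (Euc D)) (x : Euc D)
    (u : Set (Euc d)) (ψ : Euc d → Euc D) (y₀ : Euc d)
    (hu : IsOpen u) (hy₀u : y₀ ∈ u) (hψy₀ : ψ y₀ = x)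
    (hψ : ContDiffOn ℝ 1 ψ u) (hmaps : Set.MapsTo ψ u N) :
    Set.range (fderiv ℝ ψ y₀) ⊆ TangentSetAt N x := by
  rintro p ⟨w, rfl⟩
  obtain ⟨ρ, hρpos, hρ⟩ := Metric.isOpen_iff.mp hu y₀ hy₀u
  set c : ℝ := ρ / (2 * (‖w‖ + 1)) with hc_def
  have hwpos : (0:ℝ) < ‖w‖ + 1 := by positivity
  have hcpos : 0 < c := by positivity
  set θ : ℝ → ℝ := fun t => min c (max (-c) t) with hθ_def
  have hθ0 : θ 0 = 0 := by
    simp [hθ_def, le_of_lt hcpos, max_eq_right (neg_nonpos.mpr (le_of_lt hcpos))]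
  have hθbound : ∀ t, |θ t| ≤ c := by
    intro t
    rw [abs_le]
    constructor
    · exact le_min (by linarith) (le_max_left _ _)
    · exact min_le_left _ _
  have hmem : ∀ t : ℝ, y₀ + θ t • w ∈ u := by
    intro t
    apply hρ
    rw [mem_ball, dist_eq_norm]
    have : ‖y₀ + θ t • w - y₀‖ = ‖θ t • w‖ := by congr 1; abel
    rw [this, norm_smul]
    calc |θ t| * ‖w‖ ≤ c * ‖w‖ := by
          apply mul_le_mul_of_nonneg_right (hθbound t) (norm_nonneg w)
      _ < ρ := by
          rw [hc_def, div_mul_eq_mul_div, div_lt_iff₀ (by positivity)]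
          nlinarith [norm_nonneg w, hρpos]
  set γ : ℝ → Euc D := fun t => ψ (y₀ + θ t • w) with hγ_def
  refine ⟨γ, fun t => hmaps (hmem t), by rw [hγ_def]; simp [hθ0, hψy₀], ?_⟩
  have hA : HasFDerivAt ψ (fderiv ℝ ψ y₀) y₀ :=
    ((hψ.contDiffAt (hu.mem_nhds hy₀u)).differentiableAt one_ne_zero).hasFDerivAt
  have hinner : HasDerivAt (fun t : ℝ => y₀ + t • w) w 0 := by
    have h1 : HasDerivAt (fun t : ℝ => t • w) ((1:ℝ) • w) 0 :=
      (hasDerivAt_id (0:ℝ)).smul_const w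
    rw [one_smul] at h1
    exact h1.const_add y₀
  have hmain : HasDerivAt (fun t : ℝ => ψ (y₀ + t • w)) (fderiv ℝ ψ y₀ w) 0 := by
    have hA' : HasFDerivAt ψ (fderiv ℝ ψ y₀) ((fun t : ℝ => y₀ + t • w) 0) := by
      simpa using hA
    exact hA'.comp_hasDerivAt 0 hinner
  apply hmain.congr_of_eventuallyEq
  have : ∀ᶠ t in nhds (0:ℝ), |t| < c :=
    eventually_abs_sub_lt 0 hcpos |>.mono (by intro t ht; simpa using ht)
  filter_upwards [this] with t ht
  have hθt : θ t = t := by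
    rw [hθ_def]
    rw [abs_lt] at ht
    simp only
    rw [max_eq_right (le_of_lt ht.1), min_eq_right (le_of_lt ht.2)]
  rw [hγ_def]; simp [hθt]

theorem chartAnalysis {d : ℕ} (N : Set (Euc D)) (x : Euc D)
    (u : Set (Euc d)) (v : Set (Euc D)) (ψ : Euc d → Euc D) (φ : Euc D → Euc d)
    (hu : IsOpen u) (hv : IsOpen v) (hxv : x ∈ v) (hψ : ContDiffOn ℝ 1 ψ u)
    (hinj : ∀ y ∈ u, Function.Injective (fderiv ℝ ψ y))
    (hbij : Set.BijOn ψ u (N ∩ v)) (hφ : ContinuousOn φ (N ∩ v))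
    (hφψ : ∀ y ∈ u, φ (ψ y) = y) (hxN : x ∈ N) :
    ∃ (y₀ : Euc d) (F : Euc D → Euc D) (L : Euc D →L[ℝ] Euc D) (ε : ℝ),
      y₀ ∈ u ∧ ψ y₀ = x ∧ 0 < ε ∧ ContDiffAt ℝ 1 F x ∧ HasFDerivAt F L x ∧
      (∀ p ∈ N, dist p x < ε → F p = 0) ∧
      (∀ p : Euc D, L p = 0 ↔ p ∈ Set.range (fderiv ℝ ψ y₀)) := by
  obtain ⟨y₀, hy₀u, hψy₀⟩ := hbij.surjOn ⟨hxN, hxv⟩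
  set A : Euc d →L[ℝ] Euc D := fderiv ℝ ψ y₀ with hA_def
  have hψAt : ContDiffAt ℝ 1 ψ y₀ := hψ.contDiffAt (hu.mem_nhds hy₀u)
  have hψdiff : DifferentiableAt ℝ ψ y₀ := hψAt.differentiableAt one_ne_zero
  have hA : HasFDerivAt ψ A y₀ := hψdiff.hasFDerivAt
  have hAinj : Function.Injective A := hinj y₀ hy₀u
  set T : Submodule ℝ (Euc D) := LinearMap.range (A : Euc d →ₗ[ℝ] Euc D) with hT_def
  set proj : Euc D →L[ℝ] T := T.orthogonalProjectionOnto with hproj_def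
  set P : Euc D →L[ℝ] Euc D := T.subtypeL.comp proj with hP_def
  set Q : Euc D →L[ℝ] Euc D := ContinuousLinearMap.id ℝ (Euc D) - P with hQ_def
  have hPapp : ∀ q : Euc D, P q = (proj q : Euc D) := fun q => rfl
  have hQapp : ∀ q : Euc D, Q q = q - P q := fun q => rfl
  have hprojT : ∀ q : Euc D, q ∈ T → (proj q : Euc D) = q := fun q hq =>
    Submodule.starProjection_eq_self_iff.mpr hq
  set h : Euc d → T := fun z => proj (ψ z) with hh_def
  set Dh : Euc d →L[ℝ] T := proj.comp A with hDh_def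
  have hDhinj : Function.Injective Dh := by
    have key : ∀ w, Dh w = 0 → w = 0 := by
      intro w hw
      have h1 : (proj (A w) : Euc D) = A w := hprojT _ ⟨w, rfl⟩
      have h2 : (proj (A w) : Euc D) = 0 := by
        have : proj (A w) = (0 : T) := hw
        rw [this]; rfl
      have : A w = 0 := by rw [← h1, h2]
      have := hAinj (show A w = A 0 by simpa using this)
      exact this
    intro a b hab
    have : Dh (a - b) = 0 := by rw [map_sub, hab, sub_self]
    exact sub_eq_zero.mp (key _ this)
  have hDhsurj : Function.Surjective Dh := by
    have hfr1 : Module.finrank ℝ (Euc d) = d := finrank_euclideanSpace_fin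
    have hfr2 : Module.finrank ℝ T = d := by
      rw [show Module.finrank ℝ T = Module.finrank ℝ (LinearMap.range (A : Euc d →ₗ[ℝ] Euc D)) from rfl,
        LinearMap.finrank_range_of_inj hAinj, finrank_euclideanSpace_fin]
    exact (LinearMap.injective_iff_surjective_of_finrank_eq_finrank
      (f := (Dh : Euc d →ₗ[ℝ] T)) (by rw [hfr1, hfr2])).mp hDhinj
  set eT : Euc d ≃L[ℝ] T :=
    (LinearEquiv.ofBijective (Dh : Euc d →ₗ[ℝ] T) ⟨hDhinj, hDhsurj⟩).toContinuousLinearEquiv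
    with heT_def
  have heT_app : ∀ w, (eT w : T) = Dh w := fun w => rfl
  have heT_coe : (eT : Euc d →L[ℝ] T) = Dh := by
    apply ContinuousLinearMap.ext; intro w; exact heT_app w
  have hhC : ContDiffAt ℝ 1 h y₀ := (proj.contDiff.contDiffAt).comp y₀ hψAt
  have hh' : HasFDerivAt h (eT : Euc d →L[ℝ] T) y₀ := by
    rw [heT_coe]
    exact (proj.hasFDerivAt).comp y₀ hA
  set inv : T → Euc d := hhC.localInverse hh' one_ne_zero with hinv_def
  have hstrict : HasStrictFDerivAt h (eT : Euc d →L[ℝ] T) y₀ :=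
    hhC.hasStrictFDerivAt' hh' one_ne_zero
  have hinv_image : inv (h y₀) = y₀ := hhC.localInverse_apply_image hh' one_ne_zero
  have hinvC : ContDiffAt ℝ 1 inv (h y₀) := hhC.to_localInverse hh' one_ne_zero
  have hinv' : HasFDerivAt inv ((eT.symm : T →L[ℝ] Euc d)) (h y₀) :=
    hstrict.to_localInverse.hasFDerivAt
  have hleft : ∀ᶠ z in nhds y₀, inv (h z) = z := hstrict.eventually_left_inverse
  set F : Euc D → Euc D := fun p => Q p - Q (ψ (inv (proj p))) with hF_def
  have hprojx : proj x = h y₀ := by rw [← hψy₀]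
  have hinvprojx : inv (proj x) = y₀ := by rw [hprojx, hinv_image]
  -- inner composite
  have hcompC : ContDiffAt ℝ 1 (fun p : Euc D => ψ (inv (proj p))) x := by
    have h1 : ContDiffAt ℝ 1 inv (proj x) := by rw [hprojx]; exact hinvC
    have h2 : ContDiffAt ℝ 1 ψ (inv (proj x)) := by rw [hinvprojx]; exact hψAt
    exact h2.comp x (h1.comp x (proj.contDiff.contDiffAt))
  have hFC : ContDiffAt ℝ 1 F x := by
    apply ContDiffAt.sub
    · exact Q.contDiff.contDiffAt
    · exact (Q.contDiff.contDiffAt).comp x hcompC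
  set L : Euc D →L[ℝ] Euc D :=
    Q - Q.comp ((A.comp ((eT.symm : T →L[ℝ] Euc d))).comp proj) with hL_def
  have hcomp' : HasFDerivAt (fun p : Euc D => ψ (inv (proj p)))
      ((A.comp ((eT.symm : T →L[ℝ] Euc d))).comp proj) x := by
    have h1 : HasFDerivAt inv ((eT.symm : T →L[ℝ] Euc d)) (proj x) := by
      rw [hprojx]; exact hinv'
    have h2 : HasFDerivAt ψ A (inv (proj x)) := by rw [hinvprojx]; exact hA
    have h3 := h2.comp x (h1.comp x (proj.hasFDerivAt))
    exact h3
  have hF' : HasFDerivAt F L x := by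
    have := (Q.hasFDerivAt (x := x)).sub
      ((Q.hasFDerivAt (x := (ψ (inv (proj x))))).comp x hcomp')
    exact this
  have hLapp : ∀ q : Euc D, L q = Q q - Q (A (eT.symm (proj q))) := fun q => rfl
  -- vanishing of F on N near x
  have hφx : φ x = y₀ := by rw [← hψy₀]; exact hφψ y₀ hy₀u
  obtain ⟨W₁, hW₁mem, hW₁⟩ := hleft.exists_mem
  have hcw : ContinuousWithinAt φ (N ∩ v) x := hφ x ⟨hxN, hxv⟩
  have hpre : φ ⁻¹' W₁ ∈ nhdsWithin x (N ∩ v) := hcw (by rw [hφx]; exact hW₁mem)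
  rw [Metric.mem_nhdsWithin_iff] at hpre
  obtain ⟨ε₁, hε₁pos, hε₁⟩ := hpre
  obtain ⟨ε₂, hε₂pos, hε₂⟩ := Metric.isOpen_iff.mp hv x hxv
  refine ⟨y₀, F, L, min ε₁ ε₂, hy₀u, hψy₀, lt_min hε₁pos hε₂pos, hFC, hF', ?_, ?_⟩
  · intro p hpN hdist
    have hpv : p ∈ v := hε₂ (mem_ball.mpr (lt_of_lt_of_le hdist (min_le_right _ _)))
    have hpNv : p ∈ N ∩ v := ⟨hpN, hpv⟩
    obtain ⟨z, hzu, hψz⟩ := hbij.surjOn hpNv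
    have hφp : φ p = z := by rw [← hψz]; exact hφψ z hzu
    have hzW₁ : z ∈ W₁ := by
      have := hε₁ ⟨mem_ball.mpr (lt_of_lt_of_le hdist (min_le_left _ _)), hpNv⟩
      rwa [Set.mem_preimage, hφp] at this
    have hinvz : inv (h z) = z := hW₁ z hzW₁
    have : F p = Q p - Q (ψ (inv (proj p))) := rfl
    rw [this, ← hψz]
    have : proj (ψ z) = h z := rfl
    rw [this, hinvz, sub_self]
  · intro p
    constructor
    · intro hLp
      rw [hLapp] at hLp
      set w : Euc d := eT.symm (proj p) with hw_def
      have hQQ : Q p = Q (A w) := by rwa [sub_eq_zero] at hLp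
      have hprojAw : proj (A w) = proj p := by
        have h1 : proj (A w) = Dh w := rfl
        have h2 : (Dh w : T) = eT w := (heT_app w).symm
        rw [h1, h2, hw_def, eT.apply_symm_apply]
      refine ⟨w, ?_⟩
      have hdecomp : ∀ q : Euc D, q = P q + Q q := by
        intro q; rw [hQapp]; abel
      have : A w = P (A w) + Q (A w) := hdecomp (A w)
      rw [this, hPapp, hprojAw, ← hPapp, ← hQQ, ← hdecomp]
    · rintro ⟨w, rfl⟩
      rw [hLapp]
      have h1 : proj (A w) = eT w := by
        have : proj (A w) = Dh w := rfl
        rw [this]; exact (heT_app w).symm ▸ rfl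
      rw [h1, eT.symm_apply_apply, sub_self]

end Helpers

/-- tangent set equals the range of the chart differential -/
theorem tangent_eq_of_chart {d : ℕ} (N : Set (Euc D)) (x : Euc D)
    (u : Set (Euc d)) (ψ : Euc d → Euc D) (y₀ : Euc d)
    (hu : IsOpen u) (hy₀u : y₀ ∈ u) (hψy₀ : ψ y₀ = x)
    (hψ : ContDiffOn ℝ 1 ψ u) (hmaps : Set.MapsTo ψ u N)
    (F : Euc D → Euc D) (L : Euc D →L[ℝ] Euc D) (ε : ℝ) (hε : 0 < ε)
    (hF' : HasFDerivAt F L x) (hvan : ∀ p ∈ N, dist p x < ε → F p = 0)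
    (hker : ∀ p : Euc D, L p = 0 ↔ p ∈ Set.range (fderiv ℝ ψ y₀)) :
    TangentSetAt N x = Set.range (fderiv ℝ ψ y₀) := by
  apply Set.Subset.antisymm
  · intro p hp
    exact (hker p).mp (tangent_subset_ker N x F L ε hε hF' hvan p hp)
  · exact range_subset_tangent N x u ψ y₀ hu hy₀u hψy₀ hψ hmaps

/-- Corollary `thm:non_parallel_intersections_have_measure_zero`.
Let `M, M' ⊂ ℝ^D` be compact `d`-dimensional `C¹` submanifolds and `x ∈ M ∩ M'` with
`T_x M ≠ T_x M'`. Then there is `r > 0` such that `M ∩ M' ∩ B̄(x, r)` has `d`-dimensional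
Hausdorff measure zero. -/
theorem hausdorff_measure_zero_of_transverse_intersection (d : ℕ) (M M' : Set (Euc D))
    (hM : IsSubmanifold 1 d M) (hM' : IsSubmanifold 1 d M')
    (hMc : IsCompact M) (hMc' : IsCompact M')
    (x : Euc D) (hxM : x ∈ M) (hxM' : x ∈ M')
    (hT : TangentSetAt M x ≠ TangentSetAt M' x) :
    ∃ r : ℝ, 0 < r ∧ μH[(d : ℝ)] (M ∩ M' ∩ Metric.closedBall x r) = 0 := by
  obtain ⟨u, v, ψ, φ, hu, hv, hxv, hψ, hinj, hbij, hφ, hφψ⟩ := hM x hxM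
  obtain ⟨u', v', ψ', φ', hu', hv', hxv', hψ', hinj', hbij', hφ', hφψ'⟩ := hM' x hxM'
  obtain ⟨y₀, F₁, L₁, ε₁, hy₀u, hψy₀, hε₁, hF₁C, hF₁', hvan₁, hker₁⟩ :=
    chartAnalysis M x u v ψ φ hu hv hxv hψ hinj hbij hφ hφψ hxM
  obtain ⟨z₀, F₂, L₂, ε₂, hz₀u, hψz₀, hε₂, hF₂C, hF₂', hvan₂, hker₂⟩ :=
    chartAnalysis M' x u' v' ψ' φ' hu' hv' hxv' hψ' hinj' hbij' hφ' hφψ' hxM'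
  set A : Euc d →L[ℝ] Euc D := fderiv ℝ ψ y₀ with hA_def
  set A' : Euc d →L[ℝ] Euc D := fderiv ℝ ψ' z₀ with hA'_def
  have hTM : TangentSetAt M x = Set.range A :=
    tangent_eq_of_chart M x u ψ y₀ hu hy₀u hψy₀ hψ
      (fun z hz => (hbij.mapsTo hz).1) F₁ L₁ ε₁ hε₁ hF₁' hvan₁ hker₁
  have hTM' : TangentSetAt M' x = Set.range A' :=
    tangent_eq_of_chart M' x u' ψ' z₀ hu' hz₀u hψz₀ hψ'
      (fun z hz => (hbij'.mapsTo hz).1) F₂ L₂ ε₂ hε₂ hF₂' hvan₂ hker₂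
  have hψAt : ContDiffAt ℝ 1 ψ y₀ := hψ.contDiffAt (hu.mem_nhds hy₀u)
  have hA : HasFDerivAt ψ A y₀ := (hψAt.differentiableAt one_ne_zero).hasFDerivAt
  -- find w₀ with L₂ (A w₀) ≠ 0
  have hw₀ : ∃ w₀ : Euc d, L₂ (A w₀) ≠ 0 := by
    by_contra hcon
    push_neg at hcon
    apply hT
    rw [hTM, hTM']
    have hsub : LinearMap.range (A : Euc d →ₗ[ℝ] Euc D)
        ≤ LinearMap.range (A' : Euc d →ₗ[ℝ] Euc D) := by
      rintro p ⟨w, rfl⟩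
      obtain ⟨w', hw'⟩ := (hker₂ _).mp (hcon w)
      exact ⟨w', hw'⟩
    have heqrange : LinearMap.range (A : Euc d →ₗ[ℝ] Euc D)
        = LinearMap.range (A' : Euc d →ₗ[ℝ] Euc D) := by
      apply Submodule.eq_of_le_of_finrank_le hsub
      rw [LinearMap.finrank_range_of_inj (hinj y₀ hy₀u),
        LinearMap.finrank_range_of_inj (hinj' z₀ hz₀u)]
    have := congrArg (fun (S : Submodule ℝ (Euc D)) => (S : Set (Euc D))) heqrange
    simpa [LinearMap.coe_range] using this
  obtain ⟨w₀, hL₂Aw₀⟩ := hw₀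
  set a : Euc D := L₂ (A w₀) with ha_def
  -- scalar function
  set gg : Euc d → ℝ := fun y => ⟪a, F₂ (ψ y)⟫ with hgg_def
  have hF₂ψC : ContDiffAt ℝ 1 (fun y => F₂ (ψ y)) y₀ := by
    have : ContDiffAt ℝ 1 F₂ (ψ y₀) := by rw [hψy₀]; exact hF₂C
    exact this.comp y₀ hψAt
  have hggC : ContDiffAt ℝ 1 gg y₀ :=
    ((innerSL ℝ a).contDiff.contDiffAt).comp y₀ hF₂ψC
  set LL : Euc d →L[ℝ] ℝ := (innerSL ℝ a).comp (L₂.comp A) with hLL_def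
  have hgg' : HasFDerivAt gg LL y₀ := by
    have h1 : HasFDerivAt F₂ L₂ (ψ y₀) := by rw [hψy₀]; exact hF₂'
    have h2 : HasFDerivAt (fun y => F₂ (ψ y)) (L₂.comp A) y₀ := h1.comp y₀ hA
    exact ((innerSL ℝ a).hasFDerivAt).comp y₀ h2
  have hLLapp : ∀ h : Euc d, LL h = ⟪a, L₂ (A h)⟫ := fun h => rfl
  have hLLw₀ : LL w₀ ≠ 0 := by
    rw [hLLapp, real_inner_self_eq_norm_sq]
    exact pow_ne_zero 2 (norm_ne_zero_iff.mpr hL₂Aw₀)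
  have hw₀ne : w₀ ≠ 0 := by
    intro h0
    apply hLLw₀
    rw [h0]; simp
  set e : Euc d := ‖w₀‖⁻¹ • w₀ with he_def
  have he : ‖e‖ = 1 := norm_smul_inv_norm hw₀ne
  have hee : ⟪e, e⟫ = 1 := by rw [real_inner_self_eq_norm_sq, he]; norm_num
  have hLLe : LL e ≠ 0 := by
    rw [he_def, _root_.map_smul, smul_eq_mul]
    exact mul_ne_zero (inv_ne_zero (norm_ne_zero_iff.mpr hw₀ne)) hLLw₀
  -- the straightening map
  set Ψ : Euc d → Euc d := fun y => y - ⟪e, y⟫ • e + gg y • e with hΨ_def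
  set M₁ : Euc d →L[ℝ] Euc d :=
    ContinuousLinearMap.id ℝ (Euc d) - (innerSL ℝ e).smulRight e with hM₁_def
  set LΨ : Euc d →L[ℝ] Euc d := M₁ + LL.smulRight e with hLΨ_def
  have hLΨapp : ∀ h : Euc d, LΨ h = h - ⟪e, h⟫ • e + LL h • e := fun h => rfl
  have hΨC : ContDiffAt ℝ 1 Ψ y₀ := by
    apply ContDiffAt.add
    · exact M₁.contDiff.contDiffAt
    · exact hggC.smul contDiffAt_const
  have hΨ' : HasFDerivAt Ψ LΨ y₀ := by
    have h1 : HasFDerivAt (fun y : Euc d => y - ⟪e, y⟫ • e) M₁ y₀ := M₁.hasFDerivAt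
    have h2 : HasFDerivAt (fun y : Euc d => gg y • e) (LL.smulRight e) y₀ :=
      hgg'.smul_const e
    exact h1.add h2
  have hLΨinj : Function.Injective LΨ := by
    have key : ∀ h : Euc d, LΨ h = 0 → h = 0 := by
      intro h hh
      rw [hLΨapp] at hh
      have hinner0 : ⟪e, h - ⟪e, h⟫ • e + LL h • e⟫ = LL h := by
        simp only [inner_add_right, inner_sub_right, real_inner_smul_right, hee]
        ring
      have hLLh : LL h = 0 := by rw [← hinner0, hh, inner_zero_right]
      have hh2 : h - ⟪e, h⟫ • e = 0 := by
        rw [hLLh] at hh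
        simpa using hh
      have hh3 : h = ⟪e, h⟫ • e := by rwa [sub_eq_zero] at hh2
      have : ⟪e, h⟫ * LL e = 0 := by
        rw [← smul_eq_mul, ← _root_.map_smul, ← hh3, hLLh]
      have h4 : ⟪e, h⟫ = 0 := by
        rcases mul_eq_zero.mp this with h5 | h5
        · exact h5
        · exact absurd h5 hLLe
      rw [hh3, h4, zero_smul]
    intro p q hpq
    have : LΨ (p - q) = 0 := by rw [map_sub, hpq, sub_self]
    exact sub_eq_zero.mp (key _ this)
  have hLΨsurj : Function.Surjective LΨ :=
    (LinearMap.injective_iff_surjective (f := (LΨ : Euc d →ₗ[ℝ] Euc d))).mp hLΨinj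
  set ΨD : Euc d ≃L[ℝ] Euc d :=
    (LinearEquiv.ofBijective (LΨ : Euc d →ₗ[ℝ] Euc d) ⟨hLΨinj, hLΨsurj⟩).toContinuousLinearEquiv
    with hΨD_def
  have hΨDcoe : (ΨD : Euc d →L[ℝ] Euc d) = LΨ := by
    apply ContinuousLinearMap.ext; intro w; rfl
  have hΨ'' : HasFDerivAt Ψ (ΨD : Euc d →L[ℝ] Euc d) y₀ := by rw [hΨDcoe]; exact hΨ'
  set inv2 : Euc d → Euc d := hΨC.localInverse hΨ'' one_ne_zero with hinv2_def
  have hstrict2 : HasStrictFDerivAt Ψ (ΨD : Euc d →L[ℝ] Euc d) y₀ :=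
    hΨC.hasStrictFDerivAt' hΨ'' one_ne_zero
  have hleft2 : ∀ᶠ z in nhds y₀, inv2 (Ψ z) = z := hstrict2.eventually_left_inverse
  have hinv2C : ContDiffAt ℝ 1 inv2 (Ψ y₀) := hΨC.to_localInverse hΨ'' one_ne_zero
  obtain ⟨K₂, s₂, hs₂mem, hlip₂⟩ := hinv2C.exists_lipschitzOnWith
  obtain ⟨K₁, s₁, hs₁mem, hlip₁⟩ := hψAt.exists_lipschitzOnWith
  -- combine neighbourhood conditions
  have e1 : ∀ᶠ z in nhds y₀, z ∈ s₁ := hs₁mem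
  have e3 : ∀ᶠ z in nhds y₀, Ψ z ∈ s₂ := hΨC.continuousAt hs₂mem
  obtain ⟨W, hWmem, hW⟩ := ((e1.and hleft2).and e3).exists_mem
  -- choose the radius
  have hφx : φ x = y₀ := by rw [← hψy₀]; exact hφψ y₀ hy₀u
  have hcw : ContinuousWithinAt φ (M ∩ v) x := hφ x ⟨hxM, hxv⟩
  have hpre : φ ⁻¹' W ∈ nhdsWithin x (M ∩ v) := hcw (by rw [hφx]; exact hWmem)
  rw [Metric.mem_nhdsWithin_iff] at hpre
  obtain ⟨εφ, hεφpos, hεφ⟩ := hpre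
  obtain ⟨εv, hεvpos, hεv⟩ := Metric.isOpen_iff.mp hv x hxv
  set r : ℝ := min (min ε₂ εv) εφ / 2 with hr_def
  have hrpos : 0 < r := by
    apply div_pos _ (by norm_num)
    exact lt_min (lt_min hε₂ hεvpos) hεφpos
  refine ⟨r, hrpos, ?_⟩
  have hrlt : ∀ q : Euc D, q ∈ Metric.closedBall x r → dist q x < min (min ε₂ εv) εφ := by
    intro q hq
    rw [Metric.mem_closedBall] at hq
    calc dist q x ≤ r := hq
      _ < min (min ε₂ εv) εφ := by
          rw [hr_def]
          exact half_lt_self (lt_min (lt_min hε₂ hεvpos) hεφpos)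
  -- the inclusion
  set Z : Set (Euc d) := W ∩ {z | gg z = 0} with hZ_def
  have hincl : M ∩ M' ∩ Metric.closedBall x r ⊆ ψ '' Z := by
    rintro p ⟨⟨hpM, hpM'⟩, hpball⟩
    have hdist := hrlt p hpball
    have hdε₂ : dist p x < ε₂ := lt_of_lt_of_le hdist (le_trans (min_le_left _ _) (min_le_left _ _))
    have hdεv : dist p x < εv := lt_of_lt_of_le hdist (le_trans (min_le_left _ _) (min_le_right _ _))
    have hdεφ : dist p x < εφ := lt_of_lt_of_le hdist (min_le_right _ _)
    have hpv : p ∈ v := hεv (mem_ball.mpr hdεv)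
    have hpMv : p ∈ M ∩ v := ⟨hpM, hpv⟩
    obtain ⟨z, hzu, hψz⟩ := hbij.surjOn hpMv
    have hφp : φ p = z := by rw [← hψz]; exact hφψ z hzu
    have hzW : z ∈ W := by
      have := hεφ ⟨mem_ball.mpr hdεφ, hpMv⟩
      rwa [Set.mem_preimage, hφp] at this
    have hggz : gg z = 0 := by
      rw [hgg_def]
      simp only
      rw [hψz, hvan₂ p hpM' hdε₂, inner_zero_right]
    exact ⟨z, ⟨hzW, hggz⟩, hψz⟩
  -- the measure estimate
  have hZs₁ : Z ⊆ s₁ := fun z hz => (hW z hz.1).1.1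
  have hd0 : (0:ℝ) ≤ (d:ℝ) := Nat.cast_nonneg d
  -- Z is contained in a Lipschitz image of a hyperplane
  set H : Set (Euc d) := {y : Euc d | ⟪e, y⟫ = 0} with hH_def
  have hZincl : Z ⊆ inv2 '' (H ∩ s₂) := by
    rintro z ⟨hzW, hzgg⟩
    refine ⟨Ψ z, ⟨?_, (hW z hzW).2⟩, (hW z hzW).1.2⟩
    show ⟪e, Ψ z⟫ = 0
    rw [hΨ_def]
    simp only
    rw [Set.mem_setOf_eq] at hzgg
    simp only [inner_add_right, inner_sub_right, real_inner_smul_right, hee, hzgg]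
    ring
  have hHnull : μH[(d:ℝ)] H = 0 := by
    apply vol_null_hausdorff
    have h1 : H = (LinearMap.ker (innerSL ℝ e : Euc d →ₗ[ℝ] ℝ) : Set (Euc d)) := rfl
    rw [h1]
    refine Measure.addHaar_submodule _ _ ?_
    intro htop
    have h2 : e ∈ LinearMap.ker (innerSL ℝ e : Euc d →ₗ[ℝ] ℝ) := htop ▸ Submodule.mem_top
    simp only [LinearMap.mem_ker, ContinuousLinearMap.coe_coe, innerSL_apply_apply,
      real_inner_self_eq_norm_sq, he] at h2
    norm_num at h2
  have hZnull : μH[(d:ℝ)] Z = 0 := by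
    refine le_antisymm ?_ zero_le
    calc μH[(d:ℝ)] Z ≤ μH[(d:ℝ)] (inv2 '' (H ∩ s₂)) := measure_mono hZincl
      _ ≤ (K₂ : ℝ≥0∞) ^ (d:ℝ) * μH[(d:ℝ)] (H ∩ s₂) :=
          (hlip₂.mono Set.inter_subset_right).hausdorffMeasure_image_le hd0
      _ ≤ (K₂ : ℝ≥0∞) ^ (d:ℝ) * μH[(d:ℝ)] H :=
          mul_le_mul_right (measure_mono Set.inter_subset_left) _
      _ = 0 := by rw [hHnull, mul_zero]
  refine le_antisymm ?_ zero_le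
  calc μH[(d:ℝ)] (M ∩ M' ∩ Metric.closedBall x r)
      ≤ μH[(d:ℝ)] (ψ '' Z) := measure_mono hincl
    _ ≤ (K₁ : ℝ≥0∞) ^ (d:ℝ) * μH[(d:ℝ)] Z :=
        (hlip₁.mono hZs₁).hausdorffMeasure_image_le hd0
    _ = 0 := by rw [hZnull, mul_zero]

end
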